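/- Let n ≥ 1, let Φ' ⊆ BC_n be a root subsystem in standard form, i.e. Φ' = ⋃_{B∈P} Φ_{t(B)}(B) for a partition P of {1,…,n} and types t(B) ∈ {A, D, B, C, BC} with every block of type D having at least two elements, and let Φ be any root subsystem with Φ' ⊆ Φ ⊆ BC_n. Let B_1,…,B_m enumerate the blocks of P of type A (including singleton blocks), define T : ℝ^n → ℝ^m by (Tv)_k = Σ_{i∈B_k} v_i, and set S := T(Φ ∖ Φ') ∖ {0}. Then there exist a sign function ε : {1,…,m} → {1,−1}, a partition Q of {1,…,m}, and for each block C ∈ Q a subset S_C ⊆ C, such that D_ε(S) = ⋃_{C∈Q} Ψ_C, where each Ψ_C is one of the three sets: Φ_A(C); Φ_D(C) ∪ {±2e_k : k ∈ S_C}; or Φ_D(C) ∪ {±e_k : k ∈ C} ∪ {±2e_k : k ∈ S_C}. (Here D_ε is the linear automorphism of ℝ^m with D_ε(e_k) = ε(k)·e_k.) -/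

import Mathlib

open Finset

noncomputable section

/-- Standard basis vector `e i` of `ℝ^n`. -/
def E {n : ℕ} (i : Fin n) : Fin n → ℝ := Pi.single i 1

/-- Standard inner product on `ℝ^n`. -/
def dot {n : ℕ} (v w : Fin n → ℝ) : ℝ := ∑ i, v i * w i

/-- Reflection across the hyperplane orthogonal to `α`. -/
def reflRoot {n : ℕ} (α v : Fin n → ℝ) : Fin n → ℝ := v - (2 * dot v α / dot α α) • α

/-- The root system `A_{n-1}`. -/
def Aset (n : ℕ) : Set (Fin n → ℝ) := {α | ∃ i j : Fin n, i ≠ j ∧ α = E i - E j}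

/-- The root system `D_n`. -/
def Dset (n : ℕ) : Set (Fin n → ℝ) :=
  {α | ∃ i j : Fin n, i ≠ j ∧ (α = E i - E j ∨ α = E i + E j ∨ α = -(E i + E j))}

/-- The root system `B_n`. -/
def Bset (n : ℕ) : Set (Fin n → ℝ) := Dset n ∪ {α | ∃ i : Fin n, α = E i ∨ α = -E i}

/-- The root system `C_n`. -/
def Cset (n : ℕ) : Set (Fin n → ℝ) :=
  Dset n ∪ {α | ∃ i : Fin n, α = (2:ℝ) • E i ∨ α = -((2:ℝ) • E i)}

/-- The nonreduced root system `BC_n`. -/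
def BCset (n : ℕ) : Set (Fin n → ℝ) := Bset n ∪ Cset n

/-- Types of classical irreducible root (sub)systems. -/
inductive RType | A | D | B | C | BC
deriving DecidableEq

/-- Type-`A` system on a block `B`. -/
def PhiA {n : ℕ} (B : Finset (Fin n)) : Set (Fin n → ℝ) :=
  {α | ∃ i ∈ B, ∃ j ∈ B, i ≠ j ∧ α = E i - E j}

/-- Type-`D` system on a block `B`. -/
def PhiD {n : ℕ} (B : Finset (Fin n)) : Set (Fin n → ℝ) :=
  {α | ∃ i ∈ B, ∃ j ∈ B, i ≠ j ∧ (α = E i - E j ∨ α = E i + E j ∨ α = -(E i + E j))}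

/-- Type-`B` system on a block `B`. -/
def PhiB {n : ℕ} (B : Finset (Fin n)) : Set (Fin n → ℝ) :=
  PhiD B ∪ {α | ∃ i ∈ B, α = E i ∨ α = -E i}

/-- Type-`C` system on a block `B`. -/
def PhiC {n : ℕ} (B : Finset (Fin n)) : Set (Fin n → ℝ) :=
  PhiD B ∪ {α | ∃ i ∈ B, α = (2:ℝ) • E i ∨ α = -((2:ℝ) • E i)}

/-- Type-`BC` system on a block `B`. -/
def PhiBC {n : ℕ} (B : Finset (Fin n)) : Set (Fin n → ℝ) := PhiB B ∪ PhiC B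

/-- The classical system of the given type on a block. -/
def PhiOf {n : ℕ} : RType → Finset (Fin n) → Set (Fin n → ℝ)
  | RType.A => PhiA
  | RType.D => PhiD
  | RType.B => PhiB
  | RType.C => PhiC
  | RType.BC => PhiBC

/-- The transpose of the parametrization of the kernel by the type-`A` blocks
`A 1, …, A m`: `(Tblk A v) k = ∑_{i ∈ A k} v i`. -/
def Tblk {n m : ℕ} (A : Fin m → Finset (Fin n)) (v : Fin n → ℝ) : Fin m → ℝ :=
  fun k => ∑ i ∈ A k, v i

/-- The three possible shapes of a component of a quasi-crystallograph:
type `A`; type `D` with doubled roots on a subset; type `B` with doubled roots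
on a subset (covering `B`, `C`, `BC` and the exotic types). -/
inductive QType | qA | qD | qB
deriving DecidableEq

/-- The component of shape `c` on the block `C`, with long roots on `S ⊆ C`. -/
def PsiOf {m : ℕ} : QType → Finset (Fin m) → Finset (Fin m) → Set (Fin m → ℝ)
  | QType.qA, C, _ => PhiA C
  | QType.qD, C, S => PhiD C ∪ {α | ∃ k ∈ S, α = (2:ℝ) • E k ∨ α = -((2:ℝ) • E k)}
  | QType.qB, C, S =>
      PhiD C ∪ {α | ∃ k ∈ C, α = E k ∨ α = -E k} ∪
        {α | ∃ k ∈ S, α = (2:ℝ) • E k ∨ α = -((2:ℝ) • E k)}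

section Toolkit
variable {n : ℕ}

lemma E_apply (i j : Fin n) : E i j = if j = i then 1 else 0 := Pi.single_apply i 1 j

lemma dot_E_right (v : Fin n → ℝ) (i : Fin n) : dot v (E i) = v i := by
  simp [dot, E_apply, mul_ite]

lemma dot_E_left (v : Fin n → ℝ) (i : Fin n) : dot (E i) v = v i := by
  simp [dot, E_apply, ite_mul]

lemma dot_add_right (v w u : Fin n → ℝ) : dot v (w + u) = dot v w + dot v u := by
  simp [dot, mul_add, Finset.sum_add_distrib]

lemma dot_add_left (v w u : Fin n → ℝ) : dot (v + w) u = dot v u + dot w u := by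
  simp [dot, add_mul, Finset.sum_add_distrib]

lemma dot_smul_right (c : ℝ) (v w : Fin n → ℝ) : dot v (c • w) = c * dot v w := by
  simp only [dot, Pi.smul_apply, smul_eq_mul, Finset.mul_sum]
  exact Finset.sum_congr rfl (fun i _ => by ring)

lemma dot_smul_left (c : ℝ) (v w : Fin n → ℝ) : dot (c • v) w = c * dot v w := by
  simp only [dot, Pi.smul_apply, smul_eq_mul, Finset.mul_sum]
  exact Finset.sum_congr rfl (fun i _ => by ring)

lemma dot_sub_right (v w u : Fin n → ℝ) : dot v (w - u) = dot v w - dot v u := by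
  simp [dot, mul_sub, Finset.sum_sub_distrib]

lemma dot_sub_left (v w u : Fin n → ℝ) : dot (v - w) u = dot v u - dot w u := by
  simp [dot, sub_mul, Finset.sum_sub_distrib]

lemma dot_neg_right (v w : Fin n → ℝ) : dot v (-w) = - dot v w := by
  simp [dot]

lemma dot_neg_left (v w : Fin n → ℝ) : dot (-v) w = - dot v w := by
  simp [dot]

lemma refl_neg (α v : Fin n → ℝ) : reflRoot (-α) v = reflRoot α v := by
  unfold reflRoot
  rw [dot_neg_right, dot_neg_left, dot_neg_right]
  simp [neg_div, smul_neg]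

/-- reflection across `E i + u • E j`, `u = ±1`. -/
lemma refl_pair_eq {i j : Fin n} (hij : i ≠ j) {u : ℝ} (hu : u * u = 1) (v : Fin n → ℝ) :
    reflRoot (E i + u • E j) v = v - (v i + u * v j) • (E i + u • E j) := by
  have hd1 : dot v (E i + u • E j) = v i + u * v j := by
    simp [dot_add_right, dot_smul_right, dot_E_right]
  have hd2 : dot (E i + u • E j) (E i + u • E j) = 2 := by
    simp [dot_add_right, dot_add_left, dot_smul_right, dot_smul_left, dot_E_right,
      dot_E_left, E_apply, hij, Ne.symm hij]
    linear_combination hu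
  unfold reflRoot
  rw [hd1, hd2]
  congr 1
  ring

lemma refl_sub_eq {i j : Fin n} (hij : i ≠ j) (v : Fin n → ℝ) :
    reflRoot (E i - E j) v = v - (v i - v j) • (E i - E j) := by
  have h : E i - E j = E i + (-1 : ℝ) • E j := by module
  rw [h, refl_pair_eq hij (by norm_num) v]
  match_scalars <;> ring

lemma refl_single_eq (i : Fin n) (v : Fin n → ℝ) :
    reflRoot (E i) v = v - (2 * v i) • E i := by
  unfold reflRoot
  rw [dot_E_right, dot_E_left, E_apply, if_pos rfl]
  norm_num

lemma refl_two_eq (i : Fin n) (v : Fin n → ℝ) :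
    reflRoot ((2:ℝ) • E i) v = v - (2 * v i) • E i := by
  unfold reflRoot
  rw [dot_smul_right, dot_E_right, dot_smul_left, dot_smul_right, dot_E_right,
    E_apply, if_pos rfl]
  match_scalars <;> ring

lemma dot_self_ne_zero {v : Fin n → ℝ} (hv : v ≠ 0) : dot v v ≠ 0 := by
  intro h
  apply hv
  funext x
  have hsum : ∑ i, v i * v i = 0 := h
  have := Finset.sum_eq_zero_iff_of_nonneg (fun i _ => mul_self_nonneg (v i)) |>.mp hsum x (Finset.mem_univ x)
  have : v x = 0 := by nlinarith
  simpa using this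

lemma reflRoot_self {α : Fin n → ℝ} (hα : α ≠ 0) : reflRoot α α = -α := by
  unfold reflRoot
  have h := dot_self_ne_zero hα
  rw [mul_div_assoc, div_self h]
  match_scalars <;> ring

end Toolkit
open scoped Classical

/-- Bundle of the standing hypotheses. -/
structure Setup (n m : ℕ) where
  blk : Fin n → Finset (Fin n)
  t : Finset (Fin n) → RType
  Phi' : Set (Fin n → ℝ)
  Phi : Set (Fin n → ℝ)
  A : Fin m → Finset (Fin n)
  hblk1 : ∀ i, i ∈ blk i
  hblk2 : ∀ i j, j ∈ blk i → blk j = blk i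
  hD : ∀ i, t (blk i) = RType.D → 2 ≤ (blk i).card
  hPhi' : Phi' = ⋃ i, PhiOf (t (blk i)) (blk i)
  hsub : Phi' ⊆ Phi
  hBC : Phi ⊆ BCset n
  hcl : ∀ α ∈ Phi, ∀ β ∈ Phi, reflRoot α β ∈ Phi
  hA1 : ∀ k, ∃ i, blk i = A k
  hA2 : ∀ k, t (A k) = RType.A
  hA3 : Function.Injective A
  hA4 : ∀ i, t (blk i) = RType.A → ∃ k, A k = blk i

lemma PhiA_subset_PhiOf {n : ℕ} (ty : RType) (B : Finset (Fin n)) : PhiA B ⊆ PhiOf ty B := by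
  have hAD : PhiA B ⊆ PhiD B := by
    rintro α ⟨i, hi, j, hj, hij, rfl⟩
    exact ⟨i, hi, j, hj, hij, Or.inl rfl⟩
  cases ty with
  | A => exact subset_rfl
  | D => exact hAD
  | B => exact hAD.trans Set.subset_union_left
  | C => exact hAD.trans Set.subset_union_left
  | BC => exact hAD.trans (Set.subset_union_left.trans Set.subset_union_left)


namespace Setup

variable {n m : ℕ} (St : Setup n m)

lemma blk_eq_of_memA {i : Fin n} {k : Fin m} (h : i ∈ St.A k) : St.blk i = St.A k := by
  obtain ⟨i0, h0⟩ := St.hA1 k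
  rw [← h0] at h ⊢
  exact St.hblk2 i0 i h

lemma A_disj {i : Fin n} {k l : Fin m} (hk : i ∈ St.A k) (hl : i ∈ St.A l) : k = l := by
  apply St.hA3
  rw [← St.blk_eq_of_memA hk, ← St.blk_eq_of_memA hl]

lemma tA_of_memA {i : Fin n} {k : Fin m} (h : i ∈ St.A k) : St.t (St.blk i) = RType.A := by
  rw [St.blk_eq_of_memA h]; exact St.hA2 k

lemma nonA_not_memA {j : Fin n} (h : St.t (St.blk j) ≠ RType.A) (k : Fin m) : j ∉ St.A k :=
  fun hj => h (St.tA_of_memA hj)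

lemma memA_of_nonA_forall {j : Fin n} (h : ∀ k, j ∉ St.A k) : St.t (St.blk j) ≠ RType.A := by
  intro hA
  obtain ⟨k, hk⟩ := St.hA4 j hA
  exact h k (hk ▸ St.hblk1 j)

lemma diff_mem {i j : Fin n} (hb : St.blk i = St.blk j) (hij : i ≠ j) :
    E i - E j ∈ St.Phi := by
  apply St.hsub
  rw [St.hPhi']
  apply Set.mem_iUnion.2 ⟨i, ?_⟩
  apply PhiA_subset_PhiOf
  exact ⟨i, St.hblk1 i, j, by rw [hb]; exact St.hblk1 j, hij, rfl⟩

lemma diffA_mem {i j : Fin n} {k : Fin m} (hi : i ∈ St.A k) (hj : j ∈ St.A k) (hij : i ≠ j) :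
    E i - E j ∈ St.Phi :=
  St.diff_mem (by rw [St.blk_eq_of_memA hi, St.blk_eq_of_memA hj]) hij

lemma neg_mem {α : Fin n → ℝ} (hα : α ∈ St.Phi) : -α ∈ St.Phi := by
  have hne : α ≠ 0 := by
    rcases St.hBC hα with (⟨i, j, hij, (rfl|rfl|rfl)⟩|h) | (⟨i, j, hij, (rfl|rfl|rfl)⟩|h)
    · intro h0; have := congrFun h0 i; simp [E_apply, hij, Ne.symm hij] at this
    · intro h0; have := congrFun h0 i; simp [E_apply, hij, Ne.symm hij] at this
    · intro h0; have := congrFun h0 i; simp [E_apply, hij, Ne.symm hij] at this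
    · obtain ⟨i, (rfl|rfl)⟩ := h <;>
        { intro h0; have := congrFun h0 i; simp [E_apply] at this }
    · intro h0; have := congrFun h0 i; simp [E_apply, hij, Ne.symm hij] at this
    · intro h0; have := congrFun h0 i; simp [E_apply, hij, Ne.symm hij] at this
    · intro h0; have := congrFun h0 i; simp [E_apply, hij, Ne.symm hij] at this
    · obtain ⟨i, (rfl|rfl)⟩ := h <;>
        { intro h0; have := congrFun h0 i; simp [E_apply] at this }
  have := St.hcl α hα α hα
  rwa [reflRoot_self hne] at this

lemma smul_sign_mem {α : Fin n → ℝ} {c : ℝ} (hc : c = 1 ∨ c = -1) (hα : α ∈ St.Phi) :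
    c • α ∈ St.Phi := by
  rcases hc with rfl | rfl
  · simpa using hα
  · simpa using St.neg_mem hα

end Setup
namespace Setup

variable {n m : ℕ} (St : Setup n m)

/-- Move a root of the form `E i + b • E p` by a transposition inside a block. -/
lemma move_pair {i i' p : Fin n} {k : Fin m} (hi : i ∈ St.A k) (hi' : i' ∈ St.A k)
    (hpi : p ≠ i) (hpi' : p ≠ i') (b : ℝ) (hα : E i + b • E p ∈ St.Phi) :
    E i' + b • E p ∈ St.Phi := by
  by_cases hii : i = i'
  · rwa [hii] at hα
  · have hm := St.hcl _ (St.diffA_mem hi hi' hii) _ hα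
    rw [refl_sub_eq hii] at hm
    have h1 : (E i + b • E p) i = 1 := by simp [E_apply, hii, Ne.symm hpi]
    have h2 : (E i + b • E p) i' = 0 := by simp [E_apply, Ne.symm hii, Ne.symm hpi']
    rw [h1, h2] at hm
    have : E i + b • E p - ((1:ℝ) - 0) • (E i - E i') = E i' + b • E p := by
      match_scalars <;> ring
    rw [← this]; exact hm

lemma move_short {i i' : Fin n} {k : Fin m} (hi : i ∈ St.A k) (hi' : i' ∈ St.A k)
    (hα : E i ∈ St.Phi) : E i' ∈ St.Phi := by
  by_cases hii : i = i'
  · rwa [hii] at hα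
  · have hm := St.hcl _ (St.diffA_mem hi hi' hii) _ hα
    rw [refl_sub_eq hii] at hm
    have h1 : E i i = 1 := by simp [E_apply]
    have h2 : E i i' = 0 := by simp [E_apply, Ne.symm hii]
    rw [h1, h2] at hm
    have : E i - ((1:ℝ) - 0) • (E i - E i') = E i' := by match_scalars <;> ring
    rw [← this]; exact hm

lemma move_long {i i' : Fin n} {k : Fin m} (hi : i ∈ St.A k) (hi' : i' ∈ St.A k)
    (hα : (2:ℝ) • E i ∈ St.Phi) : (2:ℝ) • E i' ∈ St.Phi := by
  by_cases hii : i = i'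
  · rwa [hii] at hα
  · have hm := St.hcl _ (St.diffA_mem hi hi' hii) _ hα
    rw [refl_sub_eq hii] at hm
    have h1 : ((2:ℝ) • E i) i = 2 := by simp [E_apply]
    have h2 : ((2:ℝ) • E i) i' = 0 := by simp [E_apply, Ne.symm hii]
    rw [h1, h2] at hm
    have : (2:ℝ) • E i - ((2:ℝ) - 0) • (E i - E i') = (2:ℝ) • E i' := by match_scalars <;> ring
    rw [← this]; exact hm

/-- Sign flip at a coordinate in a non-type-`A` block. -/
lemma flip {i j : Fin n} (hty : St.t (St.blk j) ≠ RType.A) (hij : i ∉ St.blk j)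
    (a b : ℝ) (hα : a • E i + b • E j ∈ St.Phi) : a • E i - b • E j ∈ St.Phi := by
  have hji : j ≠ i := fun h => hij (h ▸ St.hblk1 j)
  have hij' : i ≠ j := fun h => hji h.symm
  have key : ∀ γ : Fin n → ℝ, γ ∈ St.Phi' → reflRoot γ (a • E i + b • E j) = a • E i - b • E j →
      a • E i - b • E j ∈ St.Phi := fun γ hγ he => he ▸ St.hcl γ (St.hsub hγ) _ hα
  have hmem : ∀ β ∈ PhiOf (St.t (St.blk j)) (St.blk j), β ∈ St.Phi' := by
    intro β hβ; rw [St.hPhi']; exact Set.mem_iUnion.2 ⟨j, hβ⟩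
  have hvi : (a • E i + b • E j) i = a := by simp [E_apply, hji, hij']
  have hvj : (a • E i + b • E j) j = b := by simp [E_apply, hji, hij']
  cases hty' : St.t (St.blk j) with
  | A => exact absurd hty' hty
  | B =>
    apply key (E j) (hmem _ (by rw [hty']; exact Or.inr ⟨j, St.hblk1 j, Or.inl rfl⟩))
    rw [refl_single_eq, hvj]; match_scalars <;> ring
  | BC =>
    apply key (E j) (hmem _ (by rw [hty']; exact Or.inl (Or.inr ⟨j, St.hblk1 j, Or.inl rfl⟩)))
    rw [refl_single_eq, hvj]; match_scalars <;> ring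
  | C =>
    apply key ((2:ℝ) • E j) (hmem _ (by rw [hty']; exact Or.inr ⟨j, St.hblk1 j, Or.inl rfl⟩))
    rw [refl_two_eq, hvj]; match_scalars <;> ring
  | D =>
    have hcard : 2 ≤ (St.blk j).card := St.hD j hty'
    obtain ⟨j2, hj2, hj2j⟩ := Finset.exists_mem_ne (show 1 < (St.blk j).card by omega) j
    have hj2blk : j2 ∈ St.blk j := hj2
    have hj2i : j2 ≠ i := fun h => hij (h ▸ hj2blk)
    have h1 : E j + E j2 ∈ St.Phi' :=
      hmem _ (by rw [hty']; exact ⟨j, St.hblk1 j, j2, hj2blk, Ne.symm hj2j, Or.inr (Or.inl rfl)⟩)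
    have h2 : E j - E j2 ∈ St.Phi' :=
      hmem _ (by rw [hty']; exact ⟨j, St.hblk1 j, j2, hj2blk, Ne.symm hj2j, Or.inl rfl⟩)
    have step1 : reflRoot (E j + E j2) (a • E i + b • E j) = a • E i - b • E j2 := by
      have : E j + E j2 = E j + (1:ℝ) • E j2 := by module
      rw [this, refl_pair_eq (Ne.symm hj2j) (by norm_num), hvj]
      have : (a • E i + b • E j) j2 = 0 := by simp [E_apply, hj2i, hj2j]
      rw [this]; match_scalars <;> ring
    have hst1 : a • E i - b • E j2 ∈ St.Phi := by
      rw [← step1]; exact St.hcl _ (St.hsub h1) _ hα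
    have step2 : reflRoot (E j - E j2) (a • E i - b • E j2) = a • E i - b • E j := by
      rw [refl_sub_eq (Ne.symm hj2j)]
      have e1 : (a • E i - b • E j2) j = 0 := by simp [E_apply, hji, hj2j, Ne.symm hj2j]
      have e2 : (a • E i - b • E j2) j2 = -b := by simp [E_apply, hj2i]
      rw [e1, e2]; match_scalars <;> ring
    rw [← step2]; exact St.hcl _ (St.hsub h2) _ hst1

end Setup
section Supp
variable {n : ℕ}

lemma supp_PhiBC {B : Finset (Fin n)} {α : Fin n → ℝ} (hα : α ∈ PhiBC B) :
    ∀ x, α x ≠ 0 → x ∈ B := by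
  intro x hx
  have hD : ∀ β ∈ PhiD B, ∀ y : Fin n, β y ≠ 0 → y ∈ B := by
    rintro β ⟨i, hi, j, hj, hij, (rfl|rfl|rfl)⟩ y hy <;>
    · by_cases h1 : y = i
      · exact h1 ▸ hi
      · by_cases h2 : y = j
        · exact h2 ▸ hj
        · exfalso; apply hy; simp [E_apply, h1, h2]
  have hsh : ∀ β ∈ ({α | ∃ i ∈ B, α = E i ∨ α = -E i} : Set (Fin n → ℝ)),
      ∀ y : Fin n, β y ≠ 0 → y ∈ B := by
    rintro β ⟨i, hi, (rfl|rfl)⟩ y hy <;>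
    · by_cases h1 : y = i
      · exact h1 ▸ hi
      · exfalso; apply hy; simp [E_apply, h1]
  have hlo : ∀ β ∈ ({α | ∃ i ∈ B, α = (2:ℝ) • E i ∨ α = -((2:ℝ) • E i)} : Set (Fin n → ℝ)),
      ∀ y : Fin n, β y ≠ 0 → y ∈ B := by
    rintro β ⟨i, hi, (rfl|rfl)⟩ y hy <;>
    · by_cases h1 : y = i
      · exact h1 ▸ hi
      · exfalso; apply hy; simp [E_apply, h1]
  rcases hα with (h|h) | (h|h)
  exacts [hD _ h x hx, hsh _ h x hx, hD _ h x hx, hlo _ h x hx]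

lemma PhiOf_subset_PhiBC (ty : RType) (B : Finset (Fin n)) : PhiOf ty B ⊆ PhiBC B := by
  cases ty with
  | A =>
    rintro α ⟨i, hi, j, hj, hij, rfl⟩
    exact Or.inl (Or.inl ⟨i, hi, j, hj, hij, Or.inl rfl⟩)
  | D => exact fun α h => Or.inl (Or.inl h)
  | B => exact fun α h => Or.inl h
  | C => exact fun α h => Or.inr h
  | BC => exact subset_rfl

lemma smul_single_not_PhiA (c : ℝ) (i : Fin n) (B : Finset (Fin n)) :
    c • E i ∉ PhiA B := by
  rintro ⟨p, hp, q, hq, hpq, heq⟩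
  have h1 := congrFun heq p
  have h2 := congrFun heq q
  simp [E_apply, hpq, Ne.symm hpq] at h1 h2
  by_cases hip : p = i
  · by_cases hiq : q = i
    · exact hpq (hip.trans hiq.symm)
    · simp [hip, hiq] at h1 h2
  · simp [hip] at h1
lemma smul_pairsum_not_PhiA {i j : Fin n} (hij : i ≠ j) (c : ℝ) (B : Finset (Fin n)) :
    c • (E i + E j) ∉ PhiA B := by
  rintro ⟨p, hp, q, hq, hpq, heq⟩
  have h1 := congrFun heq p
  have h2 := congrFun heq q
  simp [E_apply, hpq, Ne.symm hpq] at h1 h2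
  have ha : (0:ℝ) ≤ (if p = i then (1:ℝ) else 0) + if p = j then 1 else 0 := by positivity
  have hb : (0:ℝ) ≤ (if q = i then (1:ℝ) else 0) + if q = j then 1 else 0 := by positivity
  have key : (c * ((if p = i then (1:ℝ) else 0) + if p = j then 1 else 0)) *
      (c * ((if q = i then (1:ℝ) else 0) + if q = j then 1 else 0)) = -1 := by rw [h1, h2]; ring
  have h3 : (0:ℝ) ≤ c ^ 2 * (((if p = i then (1:ℝ) else 0) + if p = j then 1 else 0) *
      ((if q = i then (1:ℝ) else 0) + if q = j then 1 else 0)) :=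
    mul_nonneg (sq_nonneg c) (mul_nonneg ha hb)
  nlinarith [key, h3]

end Supp

namespace Setup
variable {n m : ℕ} (St : Setup n m)

lemma mem_Phi'_elim {α : Fin n → ℝ} (hα : α ∈ St.Phi') :
    ∃ i, (∀ x, α x ≠ 0 → x ∈ St.blk i) ∧ α ∈ PhiOf (St.t (St.blk i)) (St.blk i) := by
  rw [St.hPhi'] at hα
  obtain ⟨s, ⟨i, rfl⟩, hmem⟩ := hα
  exact ⟨i, fun x hx => supp_PhiBC (PhiOf_subset_PhiBC _ _ hmem) x hx, hmem⟩

lemma cross_not_Phi' {i j : Fin n} (hb : St.blk i ≠ St.blk j) {a b : ℝ}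
    (ha : a ≠ 0) (hbne : b ≠ 0) : a • E i + b • E j ∉ St.Phi' := by
  intro hmem
  have hij : i ≠ j := fun h => hb (h ▸ rfl)
  obtain ⟨i0, hsupp, -⟩ := St.mem_Phi'_elim hmem
  have h1 : i ∈ St.blk i0 := by
    apply hsupp; simp [E_apply, hij, Ne.symm hij]; exact ha
  have h2 : j ∈ St.blk i0 := by
    apply hsupp; simp [E_apply, hij, Ne.symm hij]; exact hbne
  exact hb ((St.hblk2 i0 i h1).trans (St.hblk2 i0 j h2).symm)

lemma inA_single_not_Phi' {i : Fin n} {k : Fin m} (hi : i ∈ St.A k) {c : ℝ} (hc : c ≠ 0) :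
    c • E i ∉ St.Phi' := by
  intro hmem
  obtain ⟨i0, hsupp, hP⟩ := St.mem_Phi'_elim hmem
  have h1 : i ∈ St.blk i0 := by apply hsupp; simp [E_apply]; exact hc
  have hb : St.blk i0 = St.A k := (St.hblk2 i0 i h1).symm.trans (St.blk_eq_of_memA hi)
  rw [hb, St.hA2 k] at hP
  exact smul_single_not_PhiA c i _ hP

lemma inA_pairsum_not_Phi' {i j : Fin n} {k : Fin m} (hi : i ∈ St.A k) (hj : j ∈ St.A k)
    (hij : i ≠ j) {c : ℝ} (hc : c ≠ 0) : c • (E i + E j) ∉ St.Phi' := by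
  intro hmem
  obtain ⟨i0, hsupp, hP⟩ := St.mem_Phi'_elim hmem
  have h1 : i ∈ St.blk i0 := by apply hsupp; simp [E_apply, hij, Ne.symm hij]; exact hc
  have hb : St.blk i0 = St.A k := (St.hblk2 i0 i h1).symm.trans (St.blk_eq_of_memA hi)
  rw [hb, St.hA2 k] at hP
  exact smul_pairsum_not_PhiA hij c _ hP

end Setup

section TblkLemmas
variable {n m : ℕ}

lemma Tblk_add (A : Fin m → Finset (Fin n)) (v w : Fin n → ℝ) :
    Tblk A (v + w) = Tblk A v + Tblk A w := by
  funext k; simp [Tblk, Finset.sum_add_distrib]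

lemma Tblk_smul (A : Fin m → Finset (Fin n)) (c : ℝ) (v : Fin n → ℝ) :
    Tblk A (c • v) = c • Tblk A v := by
  funext k; simp [Tblk, Finset.mul_sum]

lemma Tblk_neg (A : Fin m → Finset (Fin n)) (v : Fin n → ℝ) :
    Tblk A (-v) = - Tblk A v := by
  funext k; simp [Tblk]

end TblkLemmas

namespace Setup
variable {n m : ℕ} (St : Setup n m)

lemma Tblk_E_mem {i : Fin n} {k : Fin m} (hi : i ∈ St.A k) : Tblk St.A (E i) = E k := by
  funext l
  rw [Tblk, E_apply]
  by_cases hlk : l = k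
  · subst hlk
    rw [if_pos rfl]
    rw [Finset.sum_eq_single i (fun b _ hb => by simp [E_apply, hb]) (fun h => absurd hi h)]
    simp [E_apply]
  · rw [if_neg hlk]
    apply Finset.sum_eq_zero
    intro x hx
    have : x ≠ i := fun h => hlk (St.A_disj (h ▸ hx) hi)
    simp [E_apply, this]

lemma Tblk_E_nonA {i : Fin n} (hi : ∀ k, i ∉ St.A k) : Tblk St.A (E i) = 0 := by
  funext l
  rw [Tblk]
  apply Finset.sum_eq_zero
  intro x hx
  have : x ≠ i := fun h => hi l (h ▸ hx)
  simp [E_apply, this]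

end Setup
/-- There is a pair root joining blocks `k` and `l` with relative sign `s`. -/
def PairP {n m : ℕ} (A : Fin m → Finset (Fin n)) (Φ : Set (Fin n → ℝ)) (k l : Fin m) (s : ℝ) : Prop :=
  ∃ i ∈ A k, ∃ j ∈ A l, E i + s • E j ∈ Φ

/-- The quotient has a short root at `k`. -/
def ShortP {n m : ℕ} (blk : Fin n → Finset (Fin n)) (t : Finset (Fin n) → RType)
    (A : Fin m → Finset (Fin n)) (Φ : Set (Fin n → ℝ)) (k : Fin m) : Prop :=
  (∃ i ∈ A k, E i ∈ Φ) ∨ ∃ i ∈ A k, ∃ j, t (blk j) ≠ RType.A ∧ E i + E j ∈ Φ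

/-- The quotient has a long root at `k`. -/
def LongP {n m : ℕ} (A : Fin m → Finset (Fin n)) (Φ : Set (Fin n → ℝ)) (k : Fin m) : Prop :=
  (∃ i ∈ A k, (2:ℝ) • E i ∈ Φ) ∨ ∃ i ∈ A k, ∃ j ∈ A k, i ≠ j ∧ E i + E j ∈ Φ

lemma sgnMul {a b : ℝ} (ha : a = 1 ∨ a = -1) (hb : b = 1 ∨ b = -1) :
    a * b = 1 ∨ a * b = -1 := by
  rcases ha with rfl | rfl <;> rcases hb with rfl | rfl <;> norm_num

lemma sgnNeZero {a : ℝ} (ha : a = 1 ∨ a = -1) : a ≠ 0 := by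
  rcases ha with rfl | rfl <;> norm_num

lemma sgnSq {a : ℝ} (ha : a = 1 ∨ a = -1) : a * a = 1 := by
  rcases ha with rfl | rfl <;> norm_num

namespace Setup
variable {n m : ℕ} (St : Setup n m)

lemma A_ne {k l : Fin m} (hkl : k ≠ l) {i j : Fin n} (hi : i ∈ St.A k) (hj : j ∈ St.A l) :
    i ≠ j := fun h => hkl (St.A_disj (h ▸ hi) hj)

lemma blkA_ne {k l : Fin m} (hkl : k ≠ l) {i j : Fin n} (hi : i ∈ St.A k) (hj : j ∈ St.A l) :
    St.blk i ≠ St.blk j := by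
  rw [St.blk_eq_of_memA hi, St.blk_eq_of_memA hj]
  exact fun h => hkl (St.hA3 h)

lemma blk_nonA_ne {i j : Fin n} {k : Fin m} (hi : i ∈ St.A k)
    (hj : St.t (St.blk j) ≠ RType.A) : St.blk i ≠ St.blk j := by
  intro h
  exact hj (h ▸ St.tA_of_memA hi)

lemma not_mem_blk_nonA {i j : Fin n} {k : Fin m} (hi : i ∈ St.A k)
    (hj : St.t (St.blk j) ≠ RType.A) : i ∉ St.blk j := by
  intro h
  exact St.blk_nonA_ne hi hj (St.hblk2 j i h)

lemma pair_mem_S {k l : Fin m} {s c : ℝ} (hkl : k ≠ l) (hs : s = 1 ∨ s = -1)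
    (hc : c = 1 ∨ c = -1) (hp : PairP St.A St.Phi k l s) :
    c • (E k + s • E l) ∈ Tblk St.A '' (St.Phi \ St.Phi') \ {0} := by
  obtain ⟨i, hi, j, hj, hmem⟩ := hp
  refine ⟨⟨c • (E i + s • E j), ⟨St.smul_sign_mem hc hmem, ?_⟩, ?_⟩, ?_⟩
  · intro hbad
    have he : c • (E i + s • E j) = c • E i + (c * s) • E j := by module
    rw [he] at hbad
    exact St.cross_not_Phi' (St.blkA_ne hkl hi hj) (sgnNeZero hc)
      (sgnNeZero (sgnMul hc hs)) hbad
  · rw [Tblk_smul, Tblk_add, Tblk_smul, St.Tblk_E_mem hi, St.Tblk_E_mem hj]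
  · intro hbad
    have := congrFun hbad k
    have hlk : ¬ (k = l) := hkl
    simp [E_apply, hlk] at this
    exact sgnNeZero hc this

lemma short_mem_S {k : Fin m} {c : ℝ} (hc : c = 1 ∨ c = -1)
    (hp : ShortP St.blk St.t St.A St.Phi k) :
    c • E k ∈ Tblk St.A '' (St.Phi \ St.Phi') \ {0} := by
  have hne : c • E k ≠ 0 := by
    intro hbad
    have := congrFun hbad k
    simp [E_apply] at this
    exact sgnNeZero hc this
  rcases hp with ⟨i, hi, hmem⟩ | ⟨i, hi, j, hj, hmem⟩
  · refine ⟨⟨c • E i, ⟨St.smul_sign_mem hc hmem, ?_⟩, ?_⟩, hne⟩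
    · exact St.inA_single_not_Phi' hi (sgnNeZero hc)
    · rw [Tblk_smul, St.Tblk_E_mem hi]
  · refine ⟨⟨c • (E i + E j), ⟨St.smul_sign_mem hc hmem, ?_⟩, ?_⟩, hne⟩
    · intro hbad
      have he : c • (E i + E j) = c • E i + c • E j := by module
      rw [he] at hbad
      exact St.cross_not_Phi' (St.blk_nonA_ne hi hj) (sgnNeZero hc) (sgnNeZero hc) hbad
    · rw [Tblk_smul, Tblk_add, St.Tblk_E_mem hi, St.Tblk_E_nonA (St.nonA_not_memA hj)]
      simp
 
lemma long_mem_S {k : Fin m} {c : ℝ} (hc : c = 1 ∨ c = -1) (hp : LongP St.A St.Phi k) :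
    c • ((2:ℝ) • E k) ∈ Tblk St.A '' (St.Phi \ St.Phi') \ {0} := by
  have hne : c • ((2:ℝ) • E k) ≠ 0 := by
    intro hbad
    have := congrFun hbad k
    simp [E_apply] at this
    exact sgnNeZero hc this
  rcases hp with ⟨i, hi, hmem⟩ | ⟨i, hi, j, hj, hij, hmem⟩
  · refine ⟨⟨c • ((2:ℝ) • E i), ⟨St.smul_sign_mem hc hmem, ?_⟩, ?_⟩, hne⟩
    · intro hbad
      have he : c • ((2:ℝ) • E i) = (c * 2) • E i := by module
      rw [he] at hbad
      have : c * 2 ≠ 0 := by rcases hc with rfl | rfl <;> norm_num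
      exact St.inA_single_not_Phi' hi this hbad
    · rw [Tblk_smul, Tblk_smul, St.Tblk_E_mem hi]
  · refine ⟨⟨c • (E i + E j), ⟨St.smul_sign_mem hc hmem, ?_⟩, ?_⟩, hne⟩
    · intro hbad
      exact St.inA_pairsum_not_Phi' hi hj hij (sgnNeZero hc) hbad
    · rw [Tblk_smul, Tblk_add, St.Tblk_E_mem hi, St.Tblk_E_mem hj]
      congr 1
      module

end Setup
lemma BC_shapes {n : ℕ} {α : Fin n → ℝ} (hα : α ∈ BCset n) :
    (∃ i : Fin n, ∃ c : ℝ, (c = 1 ∨ c = -1) ∧ α = c • E i) ∨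
    (∃ i : Fin n, ∃ c : ℝ, (c = 1 ∨ c = -1) ∧ α = c • ((2:ℝ) • E i)) ∨
    (∃ i j : Fin n, ∃ a b : ℝ, i ≠ j ∧ (a = 1 ∨ a = -1) ∧ (b = 1 ∨ b = -1) ∧
      α = a • E i + b • E j) := by
  have hD : α ∈ Dset n →
      (∃ i : Fin n, ∃ c : ℝ, (c = 1 ∨ c = -1) ∧ α = c • E i) ∨
      (∃ i : Fin n, ∃ c : ℝ, (c = 1 ∨ c = -1) ∧ α = c • ((2:ℝ) • E i)) ∨
      (∃ i j : Fin n, ∃ a b : ℝ, i ≠ j ∧ (a = 1 ∨ a = -1) ∧ (b = 1 ∨ b = -1) ∧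
        α = a • E i + b • E j) := by
    rintro ⟨i, j, hij, (rfl | rfl | rfl)⟩
    · exact Or.inr (Or.inr ⟨i, j, 1, -1, hij, Or.inl rfl, Or.inr rfl, by module⟩)
    · exact Or.inr (Or.inr ⟨i, j, 1, 1, hij, Or.inl rfl, Or.inl rfl, by module⟩)
    · exact Or.inr (Or.inr ⟨i, j, -1, -1, hij, Or.inr rfl, Or.inr rfl, by module⟩)
  rcases hα with (h | ⟨i, (rfl | rfl)⟩) | (h | ⟨i, (rfl | rfl)⟩)
  · exact hD h
  · exact Or.inl ⟨i, 1, Or.inl rfl, by module⟩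
  · exact Or.inl ⟨i, -1, Or.inr rfl, by module⟩
  · exact hD h
  · exact Or.inr (Or.inl ⟨i, 1, Or.inl rfl, by module⟩)
  · exact Or.inr (Or.inl ⟨i, -1, Or.inr rfl, by module⟩)

namespace Setup
variable {n m : ℕ} (St : Setup n m)

lemma mem_S_elim {x : Fin m → ℝ} (hx : x ∈ Tblk St.A '' (St.Phi \ St.Phi') \ {0}) :
    (∃ k l : Fin m, ∃ s c : ℝ, k ≠ l ∧ (s = 1 ∨ s = -1) ∧ (c = 1 ∨ c = -1) ∧
        PairP St.A St.Phi k l s ∧ x = c • (E k + s • E l)) ∨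
    (∃ k : Fin m, ∃ c : ℝ, (c = 1 ∨ c = -1) ∧ ShortP St.blk St.t St.A St.Phi k ∧ x = c • E k) ∨
    (∃ k : Fin m, ∃ c : ℝ, (c = 1 ∨ c = -1) ∧ LongP St.A St.Phi k ∧ x = c • ((2:ℝ) • E k)) := by
  obtain ⟨⟨α, ⟨hΦ, hnΦ'⟩, rfl⟩, hne⟩ := hx
  have hne0 : Tblk St.A α ≠ 0 := hne
  clear hne hnΦ'
  rcases BC_shapes (St.hBC hΦ) with ⟨i, c, hc, rfl⟩ | ⟨i, c, hc, rfl⟩ |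
    ⟨i, j, a, b, hij, ha, hb, rfl⟩
  · by_cases hk : ∃ k, i ∈ St.A k
    · obtain ⟨k, hk⟩ := hk
      right; left
      refine ⟨k, c, hc, Or.inl ⟨i, hk, ?_⟩, ?_⟩
      · have h1 := St.smul_sign_mem hc hΦ
        rwa [smul_smul, sgnSq hc, one_smul] at h1
      · rw [Tblk_smul, St.Tblk_E_mem hk]
    · exfalso; apply hne0
      rw [Tblk_smul, St.Tblk_E_nonA (fun k h => hk ⟨k, h⟩), smul_zero]
  · by_cases hk : ∃ k, i ∈ St.A k
    · obtain ⟨k, hk⟩ := hk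
      right; right
      refine ⟨k, c, hc, Or.inl ⟨i, hk, ?_⟩, ?_⟩
      · have h1 := St.smul_sign_mem hc hΦ
        rwa [smul_smul, smul_smul, sgnSq hc, one_mul] at h1
      · rw [Tblk_smul, Tblk_smul, St.Tblk_E_mem hk]
    · exfalso; apply hne0
      rw [Tblk_smul, Tblk_smul, St.Tblk_E_nonA (fun k h => hk ⟨k, h⟩), smul_zero, smul_zero]
  · have hs : a * b = 1 ∨ a * b = -1 := sgnMul ha hb
    have hβ : E i + (a * b) • E j ∈ St.Phi := by
      have h1 := St.smul_sign_mem ha hΦ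
      have he : a • (a • E i + b • E j) = E i + (a * b) • E j := by
        match_scalars <;> first | ring1 | (rcases ha with rfl | rfl <;> ring1)
      rwa [he] at h1
    have hTx : Tblk St.A (a • E i + b • E j) = a • Tblk St.A (E i) + b • Tblk St.A (E j) := by
      rw [Tblk_add, Tblk_smul, Tblk_smul]
    by_cases hki : ∃ k, i ∈ St.A k
    · obtain ⟨k, hk⟩ := hki
      by_cases hkj : ∃ l, j ∈ St.A l
      · obtain ⟨l, hl⟩ := hkj
        by_cases hkl : k = l
        · subst hkl
          have hTx2 : Tblk St.A (a • E i + b • E j) = a • E k + b • E k := by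
            rw [hTx, St.Tblk_E_mem hk, St.Tblk_E_mem hl]
          rcases ha with rfl | rfl <;> rcases hb with rfl | rfl
          · right; right
            refine ⟨k, 1, Or.inl rfl, Or.inr ⟨i, hk, j, hl, hij, ?_⟩, ?_⟩
            · have he : (1:ℝ) • E i + (1:ℝ) • E j = E i + E j := by module
              rwa [he] at hΦ
            · rw [hTx2]; module
          · exfalso; apply hne0; rw [hTx2]; module
          · exfalso; apply hne0; rw [hTx2]; module
          · right; right
            refine ⟨k, -1, Or.inr rfl, Or.inr ⟨i, hk, j, hl, hij, ?_⟩, ?_⟩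
            · have h1 := St.neg_mem hΦ
              have he : -((-1:ℝ) • E i + (-1:ℝ) • E j) = E i + E j := by module
              rwa [he] at h1
            · rw [hTx2]; module
        · left
          refine ⟨k, l, a * b, a, hkl, hs, ha, ⟨i, hk, j, hl, hβ⟩, ?_⟩
          rw [hTx, St.Tblk_E_mem hk, St.Tblk_E_mem hl]
          match_scalars <;> first | ring1 | (rcases ha with rfl | rfl <;> ring1)
      · have hjA : St.t (St.blk j) ≠ RType.A := St.memA_of_nonA_forall (fun l h => hkj ⟨l, h⟩)
        right; left
        refine ⟨k, a, ha, Or.inr ⟨i, hk, j, hjA, ?_⟩, ?_⟩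
        · rcases hs with hs1 | hs1
          · rwa [hs1, one_smul] at hβ
          · rw [hs1] at hβ
            have h2 := St.flip hjA (St.not_mem_blk_nonA hk hjA) 1 (-1)
              (by rw [one_smul]; exact hβ)
            have he : (1:ℝ) • E i - (-1:ℝ) • E j = E i + E j := by module
            rwa [he] at h2
        · rw [hTx, St.Tblk_E_mem hk, St.Tblk_E_nonA (fun l h => hkj ⟨l, h⟩), smul_zero, add_zero]
    · by_cases hkj : ∃ l, j ∈ St.A l
      · obtain ⟨l, hl⟩ := hkj
        have hiA : St.t (St.blk i) ≠ RType.A := St.memA_of_nonA_forall (fun k h => hki ⟨k, h⟩)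
        have hβ' : E j + (a * b) • E i ∈ St.Phi := by
          have h1 := St.smul_sign_mem hs hβ
          have he : (a * b) • (E i + (a * b) • E j) = E j + (a * b) • E i := by
            match_scalars <;> first | ring1 | (rcases hs with hs1 | hs1 <;> rw [hs1] <;> ring1)
          rwa [he] at h1
        right; left
        refine ⟨l, b, hb, Or.inr ⟨j, hl, i, hiA, ?_⟩, ?_⟩
        · rcases hs with hs1 | hs1
          · rwa [hs1, one_smul] at hβ'
          · rw [hs1] at hβ'
            have h2 := St.flip hiA (St.not_mem_blk_nonA hl hiA) 1 (-1)
              (by rw [one_smul]; exact hβ')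
            have he : (1:ℝ) • E j - (-1:ℝ) • E i = E j + E i := by module
            rwa [he] at h2
        · rw [hTx, St.Tblk_E_nonA (fun k h => hki ⟨k, h⟩), St.Tblk_E_mem hl, smul_zero, zero_add]
      · exfalso; apply hne0
        rw [hTx, St.Tblk_E_nonA (fun k h => hki ⟨k, h⟩),
          St.Tblk_E_nonA (fun l h => hkj ⟨l, h⟩), smul_zero, smul_zero, add_zero]
end Setup
lemma refl_smul {n : ℕ} {c : ℝ} (hc : c ≠ 0) (α v : Fin n → ℝ) :
    reflRoot (c • α) v = reflRoot α v := by
  unfold reflRoot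
  rw [dot_smul_right, dot_smul_left, dot_smul_right]
  rcases eq_or_ne (dot α α) 0 with h0 | h0
  · simp [h0]
  · rw [smul_smul]
    have hs2 : 2 * (c * dot v α) / (c * (c * dot α α)) * c = 2 * dot v α / dot α α := by
      rw [div_mul_eq_mul_div, div_eq_div_iff (mul_ne_zero hc (mul_ne_zero hc h0)) h0]
      ring
    rw [hs2]

namespace Setup
variable {n m : ℕ} (St : Setup n m)

/-- L1: transitivity of pair roots. -/
lemma pair_trans {k l p : Fin m} {s u : ℝ} (hkl : k ≠ l) (hlp : l ≠ p) (hkp : k ≠ p)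
    (hs : s = 1 ∨ s = -1) (hu : u = 1 ∨ u = -1)
    (h1 : PairP St.A St.Phi k l s) (h2 : PairP St.A St.Phi l p u) :
    PairP St.A St.Phi k p (-(s * u)) := by
  obtain ⟨i, hi, j, hj, hα⟩ := h1
  obtain ⟨j', hj', p', hp', hβ0⟩ := h2
  have hpj : p' ≠ j' := St.A_ne (Ne.symm hlp) hp' hj'
  have hpj2 : p' ≠ j := St.A_ne (Ne.symm hlp) hp' hj
  have hβ : E j + u • E p' ∈ St.Phi := St.move_pair hj' hj hpj hpj2 u hβ0
  have hij : i ≠ j := St.A_ne hkl hi hj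
  have hip : i ≠ p' := St.A_ne hkp hi hp'
  have hres := St.hcl _ hβ _ hα
  rw [refl_pair_eq (St.A_ne hlp hj hp') (sgnSq hu)] at hres
  have e1 : (E i + s • E j) j = s := by simp [E_apply, Ne.symm hij]
  have e2 : (E i + s • E j) p' = 0 := by simp [E_apply, Ne.symm hip, hpj2]
  rw [e1, e2] at hres
  have he : E i + s • E j - (s + u * 0) • (E j + u • E p') = E i + (-(s * u)) • E p' := by
    match_scalars <;> ring1
  rw [he] at hres
  exact ⟨i, hi, p', hp', hres⟩

/-- symmetry of pair roots. -/
lemma pair_symm {k l : Fin m} {s : ℝ} (hs : s = 1 ∨ s = -1)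
    (h : PairP St.A St.Phi k l s) : PairP St.A St.Phi l k s := by
  obtain ⟨i, hi, j, hj, hα⟩ := h
  refine ⟨j, hj, i, hi, ?_⟩
  have h1 := St.smul_sign_mem hs hα
  have he : s • (E i + s • E j) = E j + s • E i := by
    match_scalars <;> first | ring1 | (rcases hs with rfl | rfl <;> ring1)
  rwa [he] at h1

/-- L3: a short root at `k` flips pair roots at `k` and propagates to `l`. -/
lemma short_pair {k l : Fin m} {s : ℝ} (hkl : k ≠ l) (hs : s = 1 ∨ s = -1)
    (hsh : ShortP St.blk St.t St.A St.Phi k) (hp : PairP St.A St.Phi k l s) :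
    PairP St.A St.Phi k l (-s) ∧ ShortP St.blk St.t St.A St.Phi l := by
  obtain ⟨i, hi, j, hj, hα⟩ := hp
  have hij : i ≠ j := St.A_ne hkl hi hj
  rcases hsh with ⟨i0, hi0, h0⟩ | ⟨i0, hi0, j0, hj0ty, h0⟩
  · have hEi : E i ∈ St.Phi := St.move_short hi0 hi h0
    constructor
    · have hres := St.hcl _ hEi _ hα
      rw [refl_single_eq] at hres
      have e1 : (E i + s • E j) i = 1 := by simp [E_apply, hij]
      rw [e1] at hres
      have hres2 := St.neg_mem hres
      have he : -(E i + s • E j - ((2:ℝ) * 1) • E i) = E i + (-s) • E j := by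
        match_scalars <;> ring1
      rw [he] at hres2
      exact ⟨i, hi, j, hj, hres2⟩
    · have hres := St.hcl _ hα _ hEi
      rw [refl_pair_eq hij (sgnSq hs)] at hres
      have e1 : E i i = 1 := by simp [E_apply]
      have e2 : E i j = 0 := by simp [E_apply, Ne.symm hij]
      rw [e1, e2] at hres
      have h2 := St.smul_sign_mem (c := -s) (by rcases hs with rfl | rfl <;> norm_num) hres
      have he : (-s) • (E i - (1 + s * 0) • (E i + s • E j)) = E j := by
        match_scalars <;> first | ring1 | (rcases hs with rfl | rfl <;> ring1)
      rw [he] at h2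
      exact Or.inl ⟨j, hj, h2⟩
  · -- short root coming from a non-A block
    have hj0i : j0 ≠ i := fun h => St.nonA_not_memA hj0ty k (h ▸ hi)
    have hj0i0 : j0 ≠ i0 := fun h => St.nonA_not_memA hj0ty k (h ▸ hi0)
    have hj0j : j0 ≠ j := fun h => St.nonA_not_memA hj0ty l (h ▸ hj)
    have hβ' : E i + (1:ℝ) • E j0 ∈ St.Phi := by
      apply St.move_pair hi0 hi hj0i0 hj0i
      rw [one_smul]; exact h0
    have hγ : s • E j - E j0 ∈ St.Phi := by
      have hres := St.hcl _ hβ' _ hα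
      rw [refl_pair_eq (Ne.symm hj0i) (by norm_num : (1:ℝ) * 1 = 1)] at hres
      have e1 : (E i + s • E j) i = 1 := by simp [E_apply, hij]
      have e2 : (E i + s • E j) j0 = 0 := by simp [E_apply, hj0i, hj0j]
      rw [e1, e2] at hres
      have he : E i + s • E j - ((1:ℝ) + 1 * 0) • (E i + (1:ℝ) • E j0) = s • E j - E j0 := by
        match_scalars <;> ring1
      rwa [he] at hres
    have hδ : E i - E j0 ∈ St.Phi := by
      have h1 := St.flip hj0ty (St.not_mem_blk_nonA hi hj0ty) 1 1
        (by rw [show (1:ℝ) • E i + (1:ℝ) • E j0 = E i + (1:ℝ) • E j0 from by module]; exact hβ')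
      rwa [show (1:ℝ) • E i - (1:ℝ) • E j0 = E i - E j0 from by module] at h1
    constructor
    · have hres := St.hcl _ hγ _ hδ
      rw [show s • E j - E j0 = s • (E j + (-s) • E j0) from by
        match_scalars <;> first | ring1 | (rcases hs with rfl | rfl <;> ring1)] at hres
      rw [refl_smul (sgnNeZero hs), refl_pair_eq (Ne.symm hj0j)
        (by rcases hs with rfl | rfl <;> norm_num : (-s) * (-s) = 1)] at hres
      have e1 : (E i - E j0) j = 0 := by simp [E_apply, Ne.symm hij, Ne.symm hj0j]
      have e2 : (E i - E j0) j0 = -1 := by simp [E_apply, hj0i]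
      rw [e1, e2] at hres
      have he : E i - E j0 - (0 + -s * -1) • (E j + (-s) • E j0) = E i + (-s) • E j := by
        match_scalars <;> first | ring1 | (rcases hs with rfl | rfl <;> ring1)
      rw [he] at hres
      exact ⟨i, hi, j, hj, hres⟩
    · have h4 := St.smul_sign_mem hs hγ
      have he : s • (s • E j - E j0) = E j + (-s) • E j0 := by
        match_scalars <;> first | ring1 | (rcases hs with rfl | rfl <;> ring1)
      rw [he] at h4
      refine Or.inr ⟨j, hj, j0, hj0ty, ?_⟩
      rcases hs with rfl | rfl
      · have h5 := St.flip hj0ty (St.not_mem_blk_nonA hj hj0ty) 1 (-1)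
          (by rw [show (1:ℝ) • E j + (-1:ℝ) • E j0 = E j + (-(1:ℝ)) • E j0 from by module]
              exact h4)
        rwa [show (1:ℝ) • E j - (-1:ℝ) • E j0 = E j + E j0 from by module] at h5
      · rwa [show E j + (-(-1:ℝ)) • E j0 = E j + E j0 from by module] at h4

/-- L4: a long root at `k` flips pair roots at `k`. -/
lemma long_pair {k l : Fin m} {s : ℝ} (hkl : k ≠ l) (hs : s = 1 ∨ s = -1)
    (hlo : LongP St.A St.Phi k) (hp : PairP St.A St.Phi k l s) :
    PairP St.A St.Phi k l (-s) := by
  obtain ⟨i, hi, j, hj, hα⟩ := hp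
  have hij : i ≠ j := St.A_ne hkl hi hj
  rcases hlo with ⟨i0, hi0, h0⟩ | ⟨i1, hi1, i2, hi2, h12, h0⟩
  · have h2Ei : (2:ℝ) • E i ∈ St.Phi := St.move_long hi0 hi h0
    have hres := St.hcl _ h2Ei _ hα
    rw [refl_two_eq] at hres
    have e1 : (E i + s • E j) i = 1 := by simp [E_apply, hij]
    rw [e1] at hres
    have hres2 := St.neg_mem hres
    have he : -(E i + s • E j - ((2:ℝ) * 1) • E i) = E i + (-s) • E j := by
      match_scalars <;> ring1
    rw [he] at hres2
    exact ⟨i, hi, j, hj, hres2⟩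
  · -- a sum of two coordinates inside the block `A k`
    have hji1 : j ≠ i1 := St.A_ne (Ne.symm hkl) hj hi1
    have hji2 : j ≠ i2 := St.A_ne (Ne.symm hkl) hj hi2
    obtain ⟨i', hi', hii', hβ⟩ : ∃ i', i' ∈ St.A k ∧ i' ≠ i ∧ E i + (1:ℝ) • E i' ∈ St.Phi := by
      by_cases h1 : i = i1
      · subst h1
        exact ⟨i2, hi2, Ne.symm h12, by rw [one_smul]; exact h0⟩
      · by_cases h2 : i = i2
        · subst h2
          refine ⟨i1, hi1, fun h => h12 h, ?_⟩
          rw [show E i + (1:ℝ) • E i1 = E i1 + E i from by module]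
          exact h0
        · refine ⟨i2, hi2, fun h => h2 h.symm, ?_⟩
          apply St.move_pair hi1 hi (fun h => h12 h.symm) (fun h => h2 h.symm)
          rw [one_smul]; exact h0
    have hres := St.hcl _ hβ _ hα
    rw [refl_pair_eq (Ne.symm hii') (by norm_num : (1:ℝ) * 1 = 1)] at hres
    have e1 : (E i + s • E j) i = 1 := by simp [E_apply, hij]
    have e2 : (E i + s • E j) i' = 0 := by
      simp [E_apply, hii', St.A_ne hkl hi' hj]
    rw [e1, e2] at hres
    have hres2 := St.neg_mem hres
    have he : -(E i + s • E j - ((1:ℝ) + 1 * 0) • (E i + (1:ℝ) • E i')) = E i' + (-s) • E j := by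
      match_scalars <;> ring1
    rw [he] at hres2
    exact ⟨i', hi', j, hj, hres2⟩

end Setup
/-- The components relation. -/
def QRel {n m : ℕ} (A : Fin m → Finset (Fin n)) (Φ : Set (Fin n → ℝ)) (k l : Fin m) : Prop :=
  k = l ∨ ∃ s : ℝ, (s = 1 ∨ s = -1) ∧ PairP A Φ k l s

open Classical in
/-- Components of the quotient. -/
noncomputable def Qblk {n m : ℕ} (A : Fin m → Finset (Fin n)) (Φ : Set (Fin n → ℝ))
    (k : Fin m) : Finset (Fin m) :=
  Finset.univ.filter (fun l => QRel A Φ k l)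

/-- The least element of the component of `k`. -/
noncomputable def BaseOf {n m : ℕ} (A : Fin m → Finset (Fin n)) (Φ : Set (Fin n → ℝ))
    (k : Fin m) : Fin m := (Qblk A Φ k).min.getD k

open Classical in
/-- The normalizing signs. -/
noncomputable def Eps {n m : ℕ} (A : Fin m → Finset (Fin n)) (Φ : Set (Fin n → ℝ))
    (k : Fin m) : ℝ :=
  if k = BaseOf A Φ k then 1
  else if h : ∃ s : ℝ, (s = 1 ∨ s = -1) ∧ PairP A Φ (BaseOf A Φ k) k s then -h.choose else 1

/-- `k` supports pair roots with both signs. -/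
def DtypP {n m : ℕ} (A : Fin m → Finset (Fin n)) (Φ : Set (Fin n → ℝ)) (k : Fin m) : Prop :=
  ∃ l, l ≠ k ∧ PairP A Φ k l 1 ∧ PairP A Φ k l (-1)

open Classical in
/-- Location of the long roots. -/
noncomputable def SCof {n m : ℕ} (A : Fin m → Finset (Fin n)) (Φ : Set (Fin n → ℝ))
    (C : Finset (Fin m)) : Finset (Fin m) := C.filter (fun k => LongP A Φ k)

open Classical in
/-- The shape of each component. -/
noncomputable def FormOf {n m : ℕ} (blk : Fin n → Finset (Fin n)) (t : Finset (Fin n) → RType)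
    (A : Fin m → Finset (Fin n)) (Φ : Set (Fin n → ℝ)) (C : Finset (Fin m)) : QType :=
  if ∃ k ∈ C, ShortP blk t A Φ k then QType.qB
  else if (∃ k ∈ C, DtypP A Φ k) ∨ (∃ k ∈ C, LongP A Φ k) then QType.qD
  else QType.qA

namespace Setup
variable {n m : ℕ} (St : Setup n m)

lemma rel_refl (k : Fin m) : QRel St.A St.Phi k k := Or.inl rfl

lemma rel_symm {k l : Fin m} (h : QRel St.A St.Phi k l) : QRel St.A St.Phi l k := by
  rcases h with rfl | ⟨s, hs, hp⟩
  · exact Or.inl rfl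
  · exact Or.inr ⟨s, hs, St.pair_symm hs hp⟩

lemma rel_trans {k l p : Fin m} (h1 : QRel St.A St.Phi k l) (h2 : QRel St.A St.Phi l p) :
    QRel St.A St.Phi k p := by
  by_cases hkl : k = l
  · rwa [hkl]
  by_cases hlp : l = p
  · rwa [← hlp]
  by_cases hkp : k = p
  · exact Or.inl hkp
  rcases h1 with h1 | ⟨s, hs, hp1⟩
  · exact absurd h1 hkl
  rcases h2 with h2 | ⟨u, hu, hp2⟩
  · exact absurd h2 hlp
  exact Or.inr ⟨-(s * u), by rcases hs with rfl | rfl <;> rcases hu with rfl | rfl <;> norm_num,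
    St.pair_trans hkl hlp hkp hs hu hp1 hp2⟩

lemma mem_Qblk {k l : Fin m} : l ∈ Qblk St.A St.Phi k ↔ QRel St.A St.Phi k l := by
  simp [Qblk]

lemma self_mem_Qblk (k : Fin m) : k ∈ Qblk St.A St.Phi k :=
  St.mem_Qblk.mpr (St.rel_refl k)

lemma Qblk_eq {k l : Fin m} (h : QRel St.A St.Phi k l) :
    Qblk St.A St.Phi l = Qblk St.A St.Phi k := by
  ext x
  rw [St.mem_Qblk, St.mem_Qblk]
  exact ⟨fun hx => St.rel_trans h hx, fun hx => St.rel_trans (St.rel_symm h) hx⟩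

lemma rel_of_mems_Qblk {k p q : Fin m} (hp : p ∈ Qblk St.A St.Phi k)
    (hq : q ∈ Qblk St.A St.Phi k) : QRel St.A St.Phi p q :=
  St.rel_trans (St.rel_symm (St.mem_Qblk.mp hp)) (St.mem_Qblk.mp hq)

lemma base_mem (k : Fin m) : BaseOf St.A St.Phi k ∈ Qblk St.A St.Phi k := by
  obtain ⟨b, hb⟩ := Finset.min_of_nonempty ⟨k, St.self_mem_Qblk k⟩
  rw [BaseOf, hb]
  exact Finset.mem_of_min hb

lemma base_rel (k : Fin m) : QRel St.A St.Phi k (BaseOf St.A St.Phi k) :=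
  St.mem_Qblk.mp (St.base_mem k)

lemma base_congr {k l : Fin m} (h : QRel St.A St.Phi k l) :
    BaseOf St.A St.Phi l = BaseOf St.A St.Phi k := by
  obtain ⟨b, hb⟩ := Finset.min_of_nonempty ⟨k, St.self_mem_Qblk k⟩
  unfold BaseOf
  rw [St.Qblk_eq h, hb]
  rfl

lemma base_self (k : Fin m) :
    BaseOf St.A St.Phi (BaseOf St.A St.Phi k) = BaseOf St.A St.Phi k :=
  St.base_congr (St.base_rel k)

lemma eps_sign (k : Fin m) : Eps St.A St.Phi k = 1 ∨ Eps St.A St.Phi k = -1 := by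
  unfold Eps
  split_ifs with h1 h2
  · exact Or.inl rfl
  · rcases h2.choose_spec.1 with hc | hc
    · exact Or.inr (by rw [hc])
    · exact Or.inl (by rw [hc]; norm_num)
  · exact Or.inl rfl

lemma pair_unique {k l : Fin m} {s u : ℝ} (hnD : ¬ DtypP St.A St.Phi k) (hkl : k ≠ l)
    (hs : s = 1 ∨ s = -1) (hu : u = 1 ∨ u = -1)
    (h1 : PairP St.A St.Phi k l s) (h2 : PairP St.A St.Phi k l u) : s = u := by
  by_contra hne
  apply hnD
  refine ⟨l, Ne.symm hkl, ?_, ?_⟩ <;>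
    rcases hs with rfl | rfl <;> rcases hu with rfl | rfl <;> first
      | exact h1 | exact h2 | (exact absurd rfl hne)
      | (exact absurd rfl (Ne.symm hne)) | (simpa using h1) | (simpa using h2)

lemma allp_of_Dtype {k p : Fin m} (hD : DtypP St.A St.Phi k)
    (hrel : QRel St.A St.Phi k p) (hpk : p ≠ k) :
    PairP St.A St.Phi k p 1 ∧ PairP St.A St.Phi k p (-1) := by
  obtain ⟨l, hlk, hp1, hpm⟩ := hD
  rcases hrel with h | ⟨w, hw, hpw⟩
  · exact absurd h.symm hpk
  by_cases hpl : p = l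
  · subst hpl; exact ⟨hp1, hpm⟩
  have hkl : k ≠ l := Ne.symm hlk
  have hkp : k ≠ p := Ne.symm hpk
  have hlp : l ≠ p := fun h => hpl h.symm
  have hq1 : PairP St.A St.Phi l k 1 := St.pair_symm (Or.inl rfl) hp1
  have hqm : PairP St.A St.Phi l k (-1) := St.pair_symm (Or.inr rfl) hpm
  have ht1 := St.pair_trans hlk hkp hlp (Or.inl rfl) hw hq1 hpw
  have ht2 := St.pair_trans hlk hkp hlp (Or.inr rfl) hw hqm hpw
  -- ht1 : pair l p (-(1*w)), ht2 : pair l p (-(-1*w))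
  have hu1 := St.pair_trans hkl hlp hkp (Or.inl rfl) (by rcases hw with rfl | rfl <;> norm_num :
    -(1 * w) = 1 ∨ -(1 * w) = -1) hp1 ht1
  have hu2 := St.pair_trans hkl hlp hkp (Or.inl rfl) (by rcases hw with rfl | rfl <;> norm_num :
    -(-1 * w) = 1 ∨ -(-1 * w) = -1) hp1 ht2
  -- hu1 : pair k p (-(1 * -(1*w))), hu2 : pair k p (-(1 * -(-1*w)))
  rcases hw with rfl | rfl
  · norm_num at hu1 hu2
    exact ⟨hu1, hu2⟩
  · norm_num at hu1 hu2
    exact ⟨hu2, hu1⟩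

lemma Dtype_rel {k p : Fin m} (hD : DtypP St.A St.Phi k) (hrel : QRel St.A St.Phi k p) :
    DtypP St.A St.Phi p := by
  by_cases hpk : p = k
  · rwa [hpk]
  obtain ⟨h1, h2⟩ := St.allp_of_Dtype hD hrel hpk
  exact ⟨k, fun h => hpk h.symm, St.pair_symm (Or.inl rfl) h1, St.pair_symm (Or.inr rfl) h2⟩

lemma short_rel {k l : Fin m} (hsh : ShortP St.blk St.t St.A St.Phi k)
    (hrel : QRel St.A St.Phi k l) : ShortP St.blk St.t St.A St.Phi l := by
  rcases hrel with rfl | ⟨s, hs, hp⟩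
  · exact hsh
  by_cases hkl : k = l
  · rwa [← hkl]
  exact (St.short_pair hkl hs hsh hp).2

lemma Dtype_of_short {k l : Fin m} (hsh : ShortP St.blk St.t St.A St.Phi k)
    (hp : PairP St.A St.Phi k l ((1:ℝ)) ∨ PairP St.A St.Phi k l (-1:ℝ)) (hkl : k ≠ l) :
    DtypP St.A St.Phi k := by
  rcases hp with hp | hp
  · have hp' := (St.short_pair hkl (Or.inl rfl) hsh hp).1
    exact ⟨l, Ne.symm hkl, hp, hp'⟩
  · have hp' := (St.short_pair hkl (Or.inr rfl) hsh hp).1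
    refine ⟨l, Ne.symm hkl, ?_, hp⟩
    simpa using hp'

lemma Dtype_of_long {k l : Fin m} (hlo : LongP St.A St.Phi k)
    (hp : PairP St.A St.Phi k l ((1:ℝ)) ∨ PairP St.A St.Phi k l (-1:ℝ)) (hkl : k ≠ l) :
    DtypP St.A St.Phi k := by
  rcases hp with hp | hp
  · exact ⟨l, Ne.symm hkl, hp, St.long_pair hkl (Or.inl rfl) hlo hp⟩
  · refine ⟨l, Ne.symm hkl, ?_, hp⟩
    simpa using St.long_pair hkl (Or.inr rfl) hlo hp

lemma pair_of_rel {k l : Fin m} (hrel : QRel St.A St.Phi k l) (hkl : k ≠ l) :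
    ∃ s : ℝ, (s = 1 ∨ s = -1) ∧ PairP St.A St.Phi k l s := by
  rcases hrel with h | h
  · exact absurd h hkl
  · exact h

/-- cocycle property of the chosen signs on type-A components. -/
lemma eps_mul {k l : Fin m} {s : ℝ} (hkl : k ≠ l) (hs : s = 1 ∨ s = -1)
    (hp : PairP St.A St.Phi k l s)
    (hnD : ∀ p ∈ Qblk St.A St.Phi k, ¬ DtypP St.A St.Phi p) :
    Eps St.A St.Phi k * Eps St.A St.Phi l = -s := by
  have hrelkl : QRel St.A St.Phi k l := Or.inr ⟨s, hs, hp⟩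
  have hbl : BaseOf St.A St.Phi l = BaseOf St.A St.Phi k := St.base_congr hrelkl
  set b := BaseOf St.A St.Phi k with hbdef
  have hnDk : ¬ DtypP St.A St.Phi k := hnD k (St.self_mem_Qblk k)
  have hnDb : ¬ DtypP St.A St.Phi b := hnD b (St.base_mem k)
  by_cases hkb : k = b
  · have hek : Eps St.A St.Phi k = 1 := by rw [Eps, ← hbdef, if_pos hkb]
    by_cases hlb : l = b
    · exact absurd (hkb.trans hlb.symm) hkl
    · have hbex : ∃ u : ℝ, (u = 1 ∨ u = -1) ∧ PairP St.A St.Phi b l u := ⟨s, hs, hkb ▸ hp⟩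
      have hel : Eps St.A St.Phi l = -hbex.choose := by
        rw [Eps, hbl, if_neg hlb, dif_pos hbex]
      have hspec := hbex.choose_spec
      have : hbex.choose = s :=
        St.pair_unique (hkb ▸ hnDk) (hkb ▸ hkl) hspec.1 hs hspec.2 (hkb ▸ hp)
      rw [hek, hel, this, one_mul]
  · have hbex : ∃ u : ℝ, (u = 1 ∨ u = -1) ∧ PairP St.A St.Phi b k u := by
      rcases St.rel_symm (St.base_rel k) with h | h
      · exact absurd h.symm hkb
      · exact h
    have hek : Eps St.A St.Phi k = -hbex.choose := by
      rw [Eps, ← hbdef, if_neg hkb, dif_pos hbex]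
    have hspec := hbex.choose_spec
    set s0 := hbex.choose with hs0def
    have hbk : b ≠ k := fun h => hkb h.symm
    by_cases hlb : l = b
    · have hel : Eps St.A St.Phi l = 1 := by
        rw [Eps, if_pos (show l = BaseOf St.A St.Phi l from by rw [hbl]; exact hlb)]
      have h1 : PairP St.A St.Phi k l s0 := by
        rw [hlb]; exact St.pair_symm hspec.1 hspec.2
      have : s = s0 := St.pair_unique hnDk hkl hs hspec.1 hp h1
      rw [hek, hel, mul_one, this]
    · have hlbex : ∃ u : ℝ, (u = 1 ∨ u = -1) ∧ PairP St.A St.Phi b l u := by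
        have hrel : QRel St.A St.Phi b l := St.rel_trans (St.rel_symm (St.base_rel k)) hrelkl
        rcases hrel with h | h
        · exact absurd h.symm hlb
        · exact h
      have hel : Eps St.A St.Phi l = -hlbex.choose := by
        rw [Eps, hbl, if_neg hlb, dif_pos hlbex]
      have hlspec := hlbex.choose_spec
      set u0 := hlbex.choose with hu0def
      have hbl2 : b ≠ l := fun h => hlb h.symm
      have htr := St.pair_trans hbk hkl hbl2 hspec.1 hs hspec.2 hp
      have : u0 = -(s0 * s) :=
        St.pair_unique hnDb hbl2 hlspec.1
          (by rcases hspec.1 with h1 | h1 <;> rcases hs with rfl | rfl <;> rw [h1] <;> norm_num)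
          hlspec.2 htr
      rw [hek, hel, this]
      have hss0 := sgnSq hspec.1
      linear_combination (-s) * hss0

end Setup
lemma mem_PhiD_signs {m : ℕ} {C : Finset (Fin m)} {k l : Fin m} (hk : k ∈ C) (hl : l ∈ C)
    (hkl : k ≠ l) {a b : ℝ} (ha : a = 1 ∨ a = -1) (hb : b = 1 ∨ b = -1) :
    a • E k + b • E l ∈ PhiD C := by
  rcases ha with rfl | rfl <;> rcases hb with rfl | rfl
  · exact ⟨k, hk, l, hl, hkl, Or.inr (Or.inl (by module))⟩
  · exact ⟨k, hk, l, hl, hkl, Or.inl (by module)⟩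
  · exact ⟨l, hl, k, hk, Ne.symm hkl, Or.inl (by module)⟩
  · exact ⟨k, hk, l, hl, hkl, Or.inr (Or.inr (by module))⟩

lemma mem_shorts_signs {m : ℕ} {C : Finset (Fin m)} {k : Fin m} (hk : k ∈ C)
    {a : ℝ} (ha : a = 1 ∨ a = -1) :
    a • E k ∈ {α : Fin m → ℝ | ∃ k ∈ C, α = E k ∨ α = -E k} := by
  rcases ha with rfl | rfl
  · exact ⟨k, hk, Or.inl (by module)⟩
  · exact ⟨k, hk, Or.inr (by module)⟩

lemma mem_longs_signs {m : ℕ} {Sc : Finset (Fin m)} {k : Fin m} (hk : k ∈ Sc)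
    {a : ℝ} (ha : a = 1 ∨ a = -1) :
    a • ((2:ℝ) • E k) ∈ {α : Fin m → ℝ | ∃ k ∈ Sc, α = (2:ℝ) • E k ∨ α = -((2:ℝ) • E k)} := by
  rcases ha with rfl | rfl
  · exact ⟨k, hk, Or.inl (by module)⟩
  · exact ⟨k, hk, Or.inr (by module)⟩

namespace Setup
variable {n m : ℕ} (St : Setup n m)

lemma Dee_two {k l : Fin m} (hkl : k ≠ l) (a b : ℝ) :
    (fun p => Eps St.A St.Phi p * (a • E k + b • E l) p)
      = (Eps St.A St.Phi k * a) • E k + (Eps St.A St.Phi l * b) • E l := by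
  funext p
  simp only [Pi.add_apply, Pi.smul_apply, smul_eq_mul, E_apply]
  by_cases h1 : p = k
  · subst h1
    rw [if_pos rfl, if_neg hkl]
    ring
  · rw [if_neg h1]
    by_cases h2 : p = l
    · subst h2
      rw [if_pos rfl]
      ring
    · rw [if_neg h2]
      ring

lemma Dee_one (k : Fin m) (a : ℝ) :
    (fun p => Eps St.A St.Phi p * (a • E k) p) = (Eps St.A St.Phi k * a) • E k := by
  funext p
  simp only [Pi.smul_apply, smul_eq_mul, E_apply]
  by_cases h1 : p = k
  · subst h1; rw [if_pos rfl]; ring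
  · rw [if_neg h1]; ring

lemma build_pair_mem {k l : Fin m} (hkl : k ≠ l)
    (hallp : ∀ u : ℝ, (u = 1 ∨ u = -1) → PairP St.A St.Phi k l u) (a b : ℝ)
    (ha : a = 1 ∨ a = -1) (hb : b = 1 ∨ b = -1) :
    ∃ y ∈ Tblk St.A '' (St.Phi \ St.Phi') \ {0},
      (fun p => Eps St.A St.Phi p * y p) = a • E k + b • E l := by
  have hek := St.eps_sign k
  have hel := St.eps_sign l
  set c : ℝ := a * Eps St.A St.Phi k with hcdef
  set s : ℝ := c * (b * Eps St.A St.Phi l) with hsdef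
  have hc : c = 1 ∨ c = -1 := sgnMul ha hek
  have hs : s = 1 ∨ s = -1 := sgnMul hc (sgnMul hb hel)
  refine ⟨c • (E k + s • E l), St.pair_mem_S hkl hs hc (hallp s hs), ?_⟩
  have h1 : c • (E k + s • E l) = c • E k + (c * s) • E l := by module
  rw [h1, St.Dee_two hkl c (c * s)]
  have e1 : Eps St.A St.Phi k * c = a := by
    rw [hcdef]
    linear_combination a * sgnSq hek
  have e2 : Eps St.A St.Phi l * (c * s) = b := by
    rw [hsdef, hcdef]
    rcases hek with h3 | h3 <;> rcases hel with h4 | h4 <;> rw [h3, h4] <;>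
      rcases ha with rfl | rfl <;> rcases hb with rfl | rfl <;> norm_num
  rw [e1, e2]

lemma build_short_mem {k : Fin m} (hsh : ShortP St.blk St.t St.A St.Phi k) (a : ℝ)
    (ha : a = 1 ∨ a = -1) :
    ∃ y ∈ Tblk St.A '' (St.Phi \ St.Phi') \ {0},
      (fun p => Eps St.A St.Phi p * y p) = a • E k := by
  have hek := St.eps_sign k
  refine ⟨(Eps St.A St.Phi k * a) • E k, St.short_mem_S (sgnMul hek ha) hsh, ?_⟩
  rw [St.Dee_one k (Eps St.A St.Phi k * a)]
  congr 1
  linear_combination a * sgnSq hek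

lemma build_long_mem {k : Fin m} (hlo : LongP St.A St.Phi k) (a : ℝ)
    (ha : a = 1 ∨ a = -1) :
    ∃ y ∈ Tblk St.A '' (St.Phi \ St.Phi') \ {0},
      (fun p => Eps St.A St.Phi p * y p) = a • ((2:ℝ) • E k) := by
  have hek := St.eps_sign k
  refine ⟨(Eps St.A St.Phi k * a) • ((2:ℝ) • E k), St.long_mem_S (sgnMul hek ha) hlo, ?_⟩
  have h1 : (Eps St.A St.Phi k * a) • ((2:ℝ) • E k) = ((Eps St.A St.Phi k * a) * 2) • E k := by
    module
  rw [h1, St.Dee_one k _]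
  match_scalars
  linear_combination 2 * a * sgnSq hek

end Setup
/-- Classification of quotients of nested root subsystems of `BC_n`: up to sign
changes, a disjoint union of classical and exotic components. -/
theorem stmt16 (n : ℕ) (hn : 1 ≤ n)
    (blk : Fin n → Finset (Fin n)) (hblk1 : ∀ i, i ∈ blk i)
    (hblk2 : ∀ i j, j ∈ blk i → blk j = blk i)
    (t : Finset (Fin n) → RType) (hD : ∀ i, t (blk i) = RType.D → 2 ≤ (blk i).card)
    (Φ' : Set (Fin n → ℝ)) (hΦ' : Φ' = ⋃ i, PhiOf (t (blk i)) (blk i))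
    (Φ : Set (Fin n → ℝ)) (hΦ'Φ : Φ' ⊆ Φ) (hΦBC : Φ ⊆ BCset n)
    (hcl : ∀ α ∈ Φ, ∀ β ∈ Φ, reflRoot α β ∈ Φ)
    (m : ℕ) (A : Fin m → Finset (Fin n))
    (hA1 : ∀ k, ∃ i, blk i = A k) (hA2 : ∀ k, t (A k) = RType.A)
    (hA3 : Function.Injective A)
    (hA4 : ∀ i, t (blk i) = RType.A → ∃ k, A k = blk i)
    (S : Set (Fin m → ℝ)) (hS : S = Tblk A '' (Φ \ Φ') \ {0}) :
    ∃ (ε : Fin m → ℝ) (qblk : Fin m → Finset (Fin m))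
      (SC : Finset (Fin m) → Finset (Fin m)) (form : Finset (Fin m) → QType),
      (∀ k, ε k = 1 ∨ ε k = -1) ∧
      (∀ k, k ∈ qblk k) ∧ (∀ k l, l ∈ qblk k → qblk l = qblk k) ∧
      (∀ k, SC (qblk k) ⊆ qblk k) ∧
      (fun v : Fin m → ℝ => fun k => ε k * v k) '' S =
        ⋃ k, PsiOf (form (qblk k)) (qblk k) (SC (qblk k)) := by
  classical
  let St : Setup n m := ⟨blk, t, Φ', Φ, A, hblk1, hblk2, hD, hΦ', hΦ'Φ, hΦBC, hcl,
    hA1, hA2, hA3, hA4⟩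
  refine ⟨Eps St.A St.Phi, Qblk St.A St.Phi, SCof St.A St.Phi, FormOf St.blk St.t St.A St.Phi,
    St.eps_sign, St.self_mem_Qblk, fun k l h => St.Qblk_eq (St.mem_Qblk.mp h),
    fun k => Finset.filter_subset _ _, ?_⟩
  rw [hS]
  ext x
  simp only [Set.mem_image, Set.mem_iUnion]
  constructor
  · rintro ⟨y, hyS, rfl⟩
    rcases St.mem_S_elim hyS with ⟨k, l, s, c, hkl, hs, hc, hp, rfl⟩ |
      ⟨k, c, hc, hsh, rfl⟩ | ⟨k, c, hc, hlo, rfl⟩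
    · -- pair root
      refine ⟨k, ?_⟩
      have hlQ : l ∈ Qblk St.A St.Phi k := St.mem_Qblk.mpr (Or.inr ⟨s, hs, hp⟩)
      have h1 : c • (E k + s • E l) = c • E k + (c * s) • E l := by module
      have himg : (fun p => Eps St.A St.Phi p * (c • (E k + s • E l)) p)
          = (Eps St.A St.Phi k * c) • E k + (Eps St.A St.Phi l * (c * s)) • E l := by
        rw [h1, St.Dee_two hkl c (c * s)]
      show (fun p => Eps St.A St.Phi p * (c • (E k + s • E l)) p) ∈ _
      by_cases hshc : ∃ p ∈ Qblk St.A St.Phi k, ShortP St.blk St.t St.A St.Phi p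
      · simp only [FormOf]
        rw [if_pos hshc]
        simp only [PsiOf]
        rw [himg]
        exact Set.mem_union_left _ (Set.mem_union_left _
          (mem_PhiD_signs (St.self_mem_Qblk k) hlQ hkl (sgnMul (St.eps_sign k) hc)
            (sgnMul (St.eps_sign l) (sgnMul hc hs))))
      · by_cases hDL : (∃ p ∈ Qblk St.A St.Phi k, DtypP St.A St.Phi p) ∨
            (∃ p ∈ Qblk St.A St.Phi k, LongP St.A St.Phi p)
        · simp only [FormOf]
          rw [if_neg hshc, if_pos hDL]
          simp only [PsiOf]
          rw [himg]
          exact Set.mem_union_left _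
            (mem_PhiD_signs (St.self_mem_Qblk k) hlQ hkl (sgnMul (St.eps_sign k) hc)
              (sgnMul (St.eps_sign l) (sgnMul hc hs)))
        · have hnotD : ∀ p ∈ Qblk St.A St.Phi k, ¬ DtypP St.A St.Phi p := by
            intro p hpq hD'
            exact hDL (Or.inl ⟨p, hpq, hD'⟩)
          have hcoc := St.eps_mul hkl hs hp hnotD
          simp only [FormOf]
          rw [if_neg hshc, if_neg hDL]
          simp only [PsiOf]
          rw [himg]
          have e2 : Eps St.A St.Phi l * (c * s) = -(Eps St.A St.Phi k * c) := by
            rcases St.eps_sign k with h3 | h3 <;> rcases St.eps_sign l with h4 | h4 <;>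
              rw [h3, h4] at hcoc ⊢ <;> rcases hs with rfl | rfl <;>
              rcases hc with rfl | rfl <;> revert hcoc <;> norm_num
          rw [e2]
          rcases sgnMul (St.eps_sign k) hc with h5 | h5 <;> rw [h5]
          · exact ⟨k, St.self_mem_Qblk k, l, hlQ, hkl, by module⟩
          · exact ⟨l, hlQ, k, St.self_mem_Qblk k, Ne.symm hkl, by module⟩
    · -- short root
      refine ⟨k, ?_⟩
      show (fun p => Eps St.A St.Phi p * (c • E k) p) ∈ _
      have hshc : ∃ p ∈ Qblk St.A St.Phi k, ShortP St.blk St.t St.A St.Phi p :=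
        ⟨k, St.self_mem_Qblk k, hsh⟩
      simp only [FormOf]
      rw [if_pos hshc]
      simp only [PsiOf]
      rw [St.Dee_one k c]
      exact Set.mem_union_left _ (Set.mem_union_right _
        (mem_shorts_signs (St.self_mem_Qblk k) (sgnMul (St.eps_sign k) hc)))
    · -- long root
      refine ⟨k, ?_⟩
      show (fun p => Eps St.A St.Phi p * (c • ((2:ℝ) • E k)) p) ∈ _
      have hkSC : k ∈ SCof St.A St.Phi (Qblk St.A St.Phi k) :=
        Finset.mem_filter.2 ⟨St.self_mem_Qblk k, hlo⟩
      have h1 : c • ((2:ℝ) • E k) = (c * 2) • E k := by module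
      have himg : (fun p => Eps St.A St.Phi p * (c • ((2:ℝ) • E k)) p)
          = (Eps St.A St.Phi k * c) • ((2:ℝ) • E k) := by
        rw [h1, St.Dee_one k (c * 2)]
        match_scalars
        ring
      by_cases hshc : ∃ p ∈ Qblk St.A St.Phi k, ShortP St.blk St.t St.A St.Phi p
      · simp only [FormOf]
        rw [if_pos hshc]
        simp only [PsiOf]
        rw [himg]
        exact Set.mem_union_right _
          (mem_longs_signs hkSC (sgnMul (St.eps_sign k) hc))
      · have hDL : (∃ p ∈ Qblk St.A St.Phi k, DtypP St.A St.Phi p) ∨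
            (∃ p ∈ Qblk St.A St.Phi k, LongP St.A St.Phi p) :=
          Or.inr ⟨k, St.self_mem_Qblk k, hlo⟩
        simp only [FormOf]
        rw [if_neg hshc, if_pos hDL]
        simp only [PsiOf]
        rw [himg]
        exact Set.mem_union_right _
          (mem_longs_signs hkSC (sgnMul (St.eps_sign k) hc))
  · rintro ⟨k0, hx⟩
    by_cases hshc : ∃ p ∈ Qblk St.A St.Phi k0, ShortP St.blk St.t St.A St.Phi p
    · obtain ⟨p0, hp0C, hp0⟩ := hshc
      simp only [FormOf] at hx
      rw [if_pos ⟨p0, hp0C, hp0⟩] at hx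
      simp only [PsiOf] at hx
      rcases hx with (hx | hx) | hx
      · obtain ⟨k, hkC, l, hlC, hkl, hshape⟩ := hx
        have hshk : ShortP St.blk St.t St.A St.Phi k :=
          St.short_rel hp0 (St.rel_of_mems_Qblk hp0C hkC)
        have hallp : ∀ u : ℝ, (u = 1 ∨ u = -1) → PairP St.A St.Phi k l u := by
          obtain ⟨s, hs, hp⟩ := St.pair_of_rel (St.rel_of_mems_Qblk hkC hlC) hkl
          have hDk : DtypP St.A St.Phi k :=
            St.Dtype_of_short hshk
              (by rcases hs with rfl | rfl; exacts [Or.inl hp, Or.inr hp]) hkl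
          have hall := St.allp_of_Dtype hDk (Or.inr ⟨s, hs, hp⟩) (Ne.symm hkl)
          intro u hu
          rcases hu with rfl | rfl
          exacts [hall.1, hall.2]
        rcases hshape with rfl | rfl | rfl
        · obtain ⟨y, hyS, hyimg⟩ := St.build_pair_mem hkl hallp 1 (-1) (Or.inl rfl) (Or.inr rfl)
          refine ⟨y, hyS, ?_⟩
          show (fun p => Eps St.A St.Phi p * y p) = E k - E l
          rw [hyimg]; module
        · obtain ⟨y, hyS, hyimg⟩ := St.build_pair_mem hkl hallp 1 1 (Or.inl rfl) (Or.inl rfl)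
          refine ⟨y, hyS, ?_⟩
          show (fun p => Eps St.A St.Phi p * y p) = E k + E l
          rw [hyimg]; module
        · obtain ⟨y, hyS, hyimg⟩ := St.build_pair_mem hkl hallp (-1) (-1) (Or.inr rfl) (Or.inr rfl)
          refine ⟨y, hyS, ?_⟩
          show (fun p => Eps St.A St.Phi p * y p) = -(E k + E l)
          rw [hyimg]; module
      · obtain ⟨k, hkC, hxe⟩ := hx
        have hshk : ShortP St.blk St.t St.A St.Phi k :=
          St.short_rel hp0 (St.rel_of_mems_Qblk hp0C hkC)
        rcases hxe with rfl | rfl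
        · obtain ⟨y, hyS, hyimg⟩ := St.build_short_mem hshk 1 (Or.inl rfl)
          refine ⟨y, hyS, ?_⟩
          show (fun p => Eps St.A St.Phi p * y p) = E k
          rw [hyimg]; module
        · obtain ⟨y, hyS, hyimg⟩ := St.build_short_mem hshk (-1) (Or.inr rfl)
          refine ⟨y, hyS, ?_⟩
          show (fun p => Eps St.A St.Phi p * y p) = -E k
          rw [hyimg]; module
      · obtain ⟨k, hkSC, hxe⟩ := hx
        have hlo : LongP St.A St.Phi k := (Finset.mem_filter.mp hkSC).2
        rcases hxe with rfl | rfl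
        · obtain ⟨y, hyS, hyimg⟩ := St.build_long_mem hlo 1 (Or.inl rfl)
          refine ⟨y, hyS, ?_⟩
          show (fun p => Eps St.A St.Phi p * y p) = (2:ℝ) • E k
          rw [hyimg]; module
        · obtain ⟨y, hyS, hyimg⟩ := St.build_long_mem hlo (-1) (Or.inr rfl)
          refine ⟨y, hyS, ?_⟩
          show (fun p => Eps St.A St.Phi p * y p) = -((2:ℝ) • E k)
          rw [hyimg]; module
    · by_cases hDL : (∃ p ∈ Qblk St.A St.Phi k0, DtypP St.A St.Phi p) ∨
          (∃ p ∈ Qblk St.A St.Phi k0, LongP St.A St.Phi p)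
      · simp only [FormOf] at hx
        rw [if_neg hshc, if_pos hDL] at hx
        simp only [PsiOf] at hx
        rcases hx with hx | hx
        · obtain ⟨k, hkC, l, hlC, hkl, hshape⟩ := hx
          have hDk : DtypP St.A St.Phi k := by
            rcases hDL with ⟨p, hpC, hpD⟩ | ⟨p, hpC, hpL⟩
            · exact St.Dtype_rel hpD (St.rel_of_mems_Qblk hpC hkC)
            · by_cases hpk : p = k
              · subst hpk
                obtain ⟨s, hs, hq⟩ := St.pair_of_rel (St.rel_of_mems_Qblk hkC hlC) hkl
                exact St.Dtype_of_long hpL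
                  (by rcases hs with rfl | rfl; exacts [Or.inl hq, Or.inr hq]) hkl
              · obtain ⟨s, hs, hq⟩ := St.pair_of_rel (St.rel_of_mems_Qblk hpC hkC) hpk
                have hDp : DtypP St.A St.Phi p :=
                  St.Dtype_of_long hpL
                    (by rcases hs with rfl | rfl; exacts [Or.inl hq, Or.inr hq]) hpk
                exact St.Dtype_rel hDp (St.rel_of_mems_Qblk hpC hkC)
          have hall := St.allp_of_Dtype hDk (St.rel_of_mems_Qblk hkC hlC) (Ne.symm hkl)
          have hallp : ∀ u : ℝ, (u = 1 ∨ u = -1) → PairP St.A St.Phi k l u := by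
            intro u hu
            rcases hu with rfl | rfl
            exacts [hall.1, hall.2]
          rcases hshape with rfl | rfl | rfl
          · obtain ⟨y, hyS, hyimg⟩ := St.build_pair_mem hkl hallp 1 (-1) (Or.inl rfl) (Or.inr rfl)
            refine ⟨y, hyS, ?_⟩
            show (fun p => Eps St.A St.Phi p * y p) = E k - E l
            rw [hyimg]; module
          · obtain ⟨y, hyS, hyimg⟩ := St.build_pair_mem hkl hallp 1 1 (Or.inl rfl) (Or.inl rfl)
            refine ⟨y, hyS, ?_⟩
            show (fun p => Eps St.A St.Phi p * y p) = E k + E l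
            rw [hyimg]; module
          · obtain ⟨y, hyS, hyimg⟩ :=
              St.build_pair_mem hkl hallp (-1) (-1) (Or.inr rfl) (Or.inr rfl)
            refine ⟨y, hyS, ?_⟩
            show (fun p => Eps St.A St.Phi p * y p) = -(E k + E l)
            rw [hyimg]; module
        · obtain ⟨k, hkSC, hxe⟩ := hx
          have hlo : LongP St.A St.Phi k := (Finset.mem_filter.mp hkSC).2
          rcases hxe with rfl | rfl
          · obtain ⟨y, hyS, hyimg⟩ := St.build_long_mem hlo 1 (Or.inl rfl)
            refine ⟨y, hyS, ?_⟩
            show (fun p => Eps St.A St.Phi p * y p) = (2:ℝ) • E k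
            rw [hyimg]; module
          · obtain ⟨y, hyS, hyimg⟩ := St.build_long_mem hlo (-1) (Or.inr rfl)
            refine ⟨y, hyS, ?_⟩
            show (fun p => Eps St.A St.Phi p * y p) = -((2:ℝ) • E k)
            rw [hyimg]; module
      · simp only [FormOf] at hx
        rw [if_neg hshc, if_neg hDL] at hx
        simp only [PsiOf] at hx
        obtain ⟨k, hkC, l, hlC, hkl, rfl⟩ := hx
        obtain ⟨s, hs, hp⟩ := St.pair_of_rel (St.rel_of_mems_Qblk hkC hlC) hkl
        have hnD : ∀ p ∈ Qblk St.A St.Phi k, ¬ DtypP St.A St.Phi p := by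
          intro p hpQ hD'
          apply hDL
          refine Or.inl ⟨p, ?_, hD'⟩
          rwa [St.Qblk_eq (St.mem_Qblk.mp hkC)] at hpQ
        have hcoc := St.eps_mul hkl hs hp hnD
        refine ⟨Eps St.A St.Phi k • (E k + s • E l),
          St.pair_mem_S hkl hs (St.eps_sign k) hp, ?_⟩
        show (fun p => Eps St.A St.Phi p * (Eps St.A St.Phi k • (E k + s • E l)) p) = E k - E l
        have h1 : Eps St.A St.Phi k • (E k + s • E l)
            = Eps St.A St.Phi k • E k + (Eps St.A St.Phi k * s) • E l := by module
        rw [h1, St.Dee_two hkl (Eps St.A St.Phi k) (Eps St.A St.Phi k * s)]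
        have e1 : Eps St.A St.Phi k * Eps St.A St.Phi k = 1 := sgnSq (St.eps_sign k)
        have e2 : Eps St.A St.Phi l * (Eps St.A St.Phi k * s) = -1 := by
          linear_combination s * hcoc - sgnSq hs
        rw [e1, e2]
        module
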